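/- Let μ ∈ ℤ^k, let σ ∈ S_k, and let γ be the tunnel hook covering of D_μ corresponding to σ (so its terminal cells are τ_r = (σ_r + m_r, 1 + m_r) with m_r = #{ i < r : σ_i > σ_r }), with intermediate sequences ν^{(0)}, ν^{(1)}, …, ν^{(k)}. Then for every 0 ≤ r < k and every j with r < j ≤ k, ν^{(r)}_j equals the number of entries among σ_1, σ_2, …, σ_r that are greater than β_{σ,r,j−r}, where β_{σ,r,j−r} denotes the (j−r)-th smallest element of the set {σ_{r+1}, σ_{r+2}, …, σ_k}. -/

import Mathlib

open scoped BigOperators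

/-- NSym modeled as the free noncommutative ℚ-algebra on generators indexed by ℕ
(the generator `n` playing the role of `H_n` for `n ≥ 1`). -/
abbrev NSym : Type := FreeAlgebra ℚ ℕ

/-- The complete homogeneous noncommutative symmetric functions, extended to ℤ:
`H 0 = 1`, `H n = 0` for `n < 0`, and `H n` the `n`-th generator for `n ≥ 1`. -/
noncomputable def H (n : ℤ) : NSym :=
  if n < 0 then 0 else if n = 0 then 1 else FreeAlgebra.ι ℚ n.toNat

/-- `DecFrom k r ν` : `ν_r ≥ ν_{r+1} ≥ … ≥ ν_k` (1-based indexing). -/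
def DecFrom (k r : ℕ) (ν : ℕ → ℕ) : Prop :=
  ∀ i, r ≤ i → i < k → ν (i + 1) ≤ ν i

/-- `(p,q)` is a boundary cell of the partial GBPR diagram `D^{(r-1)}_{μ/ν}`. -/
def IsBoundary (k r : ℕ) (μ : ℕ → ℤ) (ν : ℕ → ℕ) (p q : ℕ) : Prop :=
  r ≤ p ∧ p ≤ k ∧
    (if p = r then
      ν r + 1 ≤ q ∧ (q : ℤ) ≤ max ((ν r : ℤ) + 1) (max (μ r) (2 * (ν r : ℤ) - μ r))
    else
      ν p + 1 ≤ q ∧ q ≤ ν (p - 1) + 1)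

/-- `(p,q)` is a tunnel cell of `D^{(r-1)}_{μ/ν}`. -/
def IsTunnel (k r : ℕ) (μ : ℕ → ℤ) (ν : ℕ → ℕ) (p q : ℕ) : Prop :=
  IsBoundary k r μ ν p q ∧ q = ν p + 1

/-- The set of boundary cells of `D^{(r-1)}_{μ/ν}` not tunnel cells. -/
def IsN (k r : ℕ) (μ : ℕ → ℤ) (ν : ℕ → ℕ) (p q : ℕ) : Prop :=
  IsBoundary k r μ ν p q ∧ ¬ IsTunnel k r μ ν p q

/-- The tunnel hook `h(r,τ)` for a tunnel cell `τ = (p,q)` of `D^{(r-1)}_{μ/ν}`: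
all boundary cells in rows `r` through `p`. -/
def hook (k r : ℕ) (μ : ℕ → ℤ) (ν : ℕ → ℕ) (p : ℕ) : Set (ℕ × ℕ) :=
  {c : ℕ × ℕ | IsBoundary k r μ ν c.1 c.2 ∧ c.1 ≤ p}

/-- The value `Δ(h(r,τ)) = (μ_r − ν_r) + (ν_r + 1 − q) + (p − r)` for `τ = (p,q)`. -/
def hookDelta (μ : ℕ → ℤ) (ν : ℕ → ℕ) (r p q : ℕ) : ℤ :=
  (μ r - (ν r : ℤ)) + (((ν r : ℤ) + 1) - (q : ℤ)) + ((p : ℤ) - (r : ℤ))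

/-- The update `ν ↦ ν^{(r)}`: `ν'_i = ν_{i-1} + 1` for `r < i ≤ p`, else `ν'_i = ν_i`. -/
def nuUpdate (ν : ℕ → ℕ) (r p : ℕ) : ℕ → ℕ := fun i =>
  if r < i ∧ i ≤ p then ν (i - 1) + 1 else ν i

/-- The sequence `ν^{(0)}, ν^{(1)}, …` of intermediate shapes of a tunnel hook covering
with terminal rows `p 1, p 2, …`. -/
def nuSeq (ν₀ : ℕ → ℕ) (p : ℕ → ℕ) : ℕ → ℕ → ℕ
  | 0 => ν₀
  | r + 1 => nuUpdate (nuSeq ν₀ p r) (r + 1) (p (r + 1))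

/-- A tunnel hook covering of `D_{μ/ν₀}` : for each `r = 1, …, k` a tunnel cell
`(p r, q r)` of `D^{(r-1)}_{μ/ν^{(r-1)}}` (values outside `1 ≤ r ≤ k` normalized to `0`). -/
structure THC (k : ℕ) (μ : ℕ → ℤ) (ν₀ : ℕ → ℕ) where
  p : ℕ → ℕ
  q : ℕ → ℕ
  tunnel : ∀ r, 1 ≤ r → r ≤ k → IsTunnel k r μ (nuSeq ν₀ p (r - 1)) (p r) (q r)
  p_out : ∀ r, r = 0 ∨ k < r → p r = 0
  q_out : ∀ r, r = 0 ∨ k < r → q r = 0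

/-- Row-ordered noncommutative determinant (Laplace expansion from the top row down). -/
noncomputable def ndet {k : ℕ} (A : Fin k → Fin k → NSym) : NSym :=
  ∑ σ : Equiv.Perm (Fin k),
    ((Equiv.Perm.sign σ : ℤ) • (List.ofFn fun i => A i (σ i)).prod)

/-- The immaculate function `I_μ = ndet (H_{μ_i + j − i})` (1-based `μ`). -/
noncomputable def Imm (k : ℕ) (μ : ℕ → ℤ) : NSym :=
  ndet fun i j : Fin k => H (μ (i.1 + 1) + ((j.1 : ℤ) + 1) - ((i.1 : ℤ) + 1))

/-- The skew immaculate function `I_{μ/ν} = ndet (H_{(μ_i − i) − (ν_j − j)})`. -/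
noncomputable def ImmSkew (k : ℕ) (μ ν : ℕ → ℤ) : NSym :=
  ndet fun i j : Fin k =>
    H ((μ (i.1 + 1) - ((i.1 : ℤ) + 1)) - (ν (j.1 + 1) - ((j.1 : ℤ) + 1)))

/-- The signed product `∏_{r=1}^{k} ε(h(r,τ_r)) H_{Δ(h(r,τ_r))}` attached to a
tunnel hook covering, the product taken in the order `r = 1, …, k`. -/
noncomputable def thcTerm (k : ℕ) (μ : ℕ → ℤ) (ν₀ : ℕ → ℕ) (γ : THC k μ ν₀) : NSym :=
  (List.ofFn fun r : Fin k =>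
    (-1 : NSym) ^ (γ.p (r.1 + 1) - (r.1 + 1)) *
      H (hookDelta μ (nuSeq ν₀ γ.p r.1) (r.1 + 1) (γ.p (r.1 + 1)) (γ.q (r.1 + 1)))).prod
/-- Two cells are adjacent iff their taxicab distance is 1. -/
def Adj (c d : ℕ × ℕ) : Prop :=
  ((c.1 : ℤ) - (d.1 : ℤ)).natAbs + ((c.2 : ℤ) - (d.2 : ℤ)).natAbs = 1

/-- A set of cells is connected: any two of its cells are joined by a chain of
cells of the set in which consecutive cells are adjacent. -/
def ConnectedSet (C : Set (ℕ × ℕ)) : Prop :=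
  ∀ c ∈ C, ∀ d ∈ C, ∃ l : List (ℕ × ℕ),
    l.head? = some c ∧ l.getLast? = some d ∧ (∀ x ∈ l, x ∈ C) ∧ l.Chain' Adj

/-- `m_r = #{ i < r : σ_i > σ_r }`. -/
def mcount {k : ℕ} (σ : Equiv.Perm (Fin k)) (r : Fin k) : ℕ :=
  (Finset.univ.filter fun i : Fin k => i < r ∧ σ r < σ i).card

/-- The set `{σ_{r+1}, …, σ_k}` of one-line (1-based) values of `σ` at positions `> r`. -/
def onelineTail {k : ℕ} (σ : Equiv.Perm (Fin k)) (r : ℕ) : Finset ℕ :=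
  (Finset.univ.filter fun i : Fin k => r < i.1 + 1).image fun i => (σ i).1 + 1

/-- `beta σ r t` : the `t`-th smallest element of `{σ_{r+1}, …, σ_k}`. -/
def beta {k : ℕ} (σ : Equiv.Perm (Fin k)) (r t : ℕ) : ℕ :=
  ((onelineTail σ r).sort (· ≤ ·)).getD (t - 1) 0

/-- The exponent `δ` in the sign of a linear permutation `π ∈ A_{k,m}`. -/
def lpInv {k m : ℕ} (π : Fin m ↪ Fin k) : ℕ :=
  (Finset.univ.filter fun p : Fin m × Fin m => p.1 < p.2 ∧ π p.2 < π p.1).card +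
  (Finset.univ.filter fun p : Fin m × Fin k => (∀ t, π t ≠ p.2) ∧ p.2 < π p.1).card

/-- `betaC π j` : the `j`-th smallest element of `{1,…,k} ∖ {π_1,…,π_m}` (1-based values). -/
def betaC {k m : ℕ} (π : Fin m ↪ Fin k) (j : ℕ) : ℕ :=
  (((Finset.univ.filter fun q : Fin k => ∀ t, π t ≠ q).image fun q => q.1 + 1).sort
    (· ≤ ·)).getD (j - 1) 0

/-- Coarsening `Θ(α,S)` of a sequence: replace the comma at each position in `S`
(1-based; position `i` lies between parts `i` and `i+1`) by addition. -/
def theta {α : Type} [Add α] (S : Finset ℕ) : ℕ → List α → List α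
  | _, [] => []
  | _, [a] => [a]
  | i, a :: b :: rest =>
      if i ∈ S then theta S (i + 1) ((a + b) :: rest)
      else a :: theta S (i + 1) (b :: rest)
  termination_by i l => l.length

noncomputable def Hlist (β : List ℤ) : NSym := (β.map H).prod

/-- The ribbon function `R_β = Σ_{γ ⪰ β} (−1)^{ℓ(β)−ℓ(γ)} H_γ`, with `R_β = 0`
whenever `β` has a part `≤ 0`. -/
noncomputable def Ribbon (β : List ℤ) : NSym :=
  if ∀ x ∈ β, 0 < x then
    ∑ S ∈ (Finset.Icc 1 (β.length - 1)).powerset,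
      (-1 : NSym) ^ (β.length - (theta S 1 β).length) * Hlist (theta S 1 β)
  else 0




lemma sorted_filter_lt_length {l : List ℕ} (hs : l.Pairwise (· < ·)) {t : ℕ}
    (ht : t < l.length) {b : ℕ} (hb : l[t] = b) : (l.filter (· < b)).length = t := by
  have hp := List.pairwise_iff_getElem.1 hs
  conv_lhs => rw [← List.take_append_drop t l]
  rw [List.filter_append]
  have h1 : (l.take t).filter (· < b) = l.take t := by
    apply List.filter_eq_self.2
    intro x hx
    obtain ⟨i, hi, hix⟩ := List.mem_iff_getElem.1 hx
    have hilen : i < min t l.length := by simpa using hi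
    rw [List.getElem_take] at hix
    have : l[i] < b := hb ▸ hp i t (by omega) ht (by omega)
    simpa [← hix] using this
  have h2 : (l.drop t).filter (· < b) = [] := by
    apply List.filter_eq_nil_iff.2
    intro x hx
    obtain ⟨i, hi, hix⟩ := List.mem_iff_getElem.1 hx
    have hilen : i < l.length - t := by simpa using hi
    rw [List.getElem_drop] at hix
    have : b ≤ l[t + i] := by
      rw [← hb]
      rcases Nat.eq_zero_or_pos i with h | h
      · subst h; simp [← hb]
      · exact (hp t (t + i) ht (by omega) (by omega)).le
    simp only [← hix, decide_eq_true_eq]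
    omega
  rw [h1, h2, List.append_nil, List.length_take]
  omega

lemma filter_card_eq (S : Finset ℕ) (b : ℕ) :
    (S.filter (· < b)).card = ((S.sort (· ≤ ·)).filter (· < b)).length := by
  have : (S.filter (· < b)).val = Multiset.filter (· < b) S.val := Finset.filter_val _ _
  rw [Finset.card, this, ← Finset.sort_eq S (· ≤ ·), Multiset.filter_coe, Multiset.coe_card]

lemma betaFin_spec (S : Finset ℕ) {t : ℕ} (ht : t < S.card) :
    (S.sort (· ≤ ·)).getD t 0 ∈ S ∧
      (S.filter (· < (S.sort (· ≤ ·)).getD t 0)).card = t := by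
  have hlen : (S.sort (· ≤ ·)).length = S.card := Finset.length_sort _
  have ht' : t < (S.sort (· ≤ ·)).length := by omega
  rw [List.getD_eq_getElem _ _ ht']
  refine ⟨(Finset.mem_sort _).1 (List.getElem_mem ht'), ?_⟩
  rw [filter_card_eq]
  exact sorted_filter_lt_length (Finset.sortedLT_sort S).pairwise ht' rfl

lemma count_lt_strict {S : Finset ℕ} {b b' : ℕ} (hb : b ∈ S) (hlt : b < b') :
    (S.filter (· < b)).card < (S.filter (· < b')).card := by
  have hsub : insert b (S.filter (· < b)) ⊆ S.filter (· < b') := by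
    intro x hx
    rcases Finset.mem_insert.1 hx with h | h
    · exact Finset.mem_filter.2 ⟨h ▸ hb, h ▸ hlt⟩
    · obtain ⟨h1, h2⟩ := Finset.mem_filter.1 h
      exact Finset.mem_filter.2 ⟨h1, by omega⟩
  have hnm : b ∉ S.filter (· < b) := by simp
  have := Finset.card_le_card hsub
  rw [Finset.card_insert_of_notMem hnm] at this
  omega

lemma getD_sort_eq {S : Finset ℕ} {t : ℕ} (ht : t < S.card) {b : ℕ}
    (hb : b ∈ S) (hc : (S.filter (· < b)).card = t) :
    (S.sort (· ≤ ·)).getD t 0 = b := by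
  obtain ⟨hmem, hcount⟩ := betaFin_spec S ht
  rcases lt_trichotomy ((S.sort (· ≤ ·)).getD t 0) b with h | h | h
  · exact absurd (count_lt_strict hmem h) (by omega)
  · exact h
  · exact absurd (count_lt_strict hb h) (by omega)

lemma count_le_count {S : Finset ℕ} {b b' : ℕ} (h : b ≤ b') :
    (S.filter (· < b)).card ≤ (S.filter (· < b')).card :=
  Finset.card_le_card fun x hx => by
    obtain ⟨h1, h2⟩ := Finset.mem_filter.1 hx
    exact Finset.mem_filter.2 ⟨h1, by omega⟩

lemma val_succ_inj {k : ℕ} (σ : Equiv.Perm (Fin k)) :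
    Function.Injective fun i : Fin k => (σ i).1 + 1 := by
  intro a b h
  exact σ.injective (Fin.val_injective (by simpa using h))

lemma onelineTail_card {k : ℕ} (σ : Equiv.Perm (Fin k)) {r : ℕ} (hr : r ≤ k) :
    (onelineTail σ r).card = k - r := by
  rw [onelineTail, Finset.card_image_of_injective _ (val_succ_inj σ)]
  have h : (Finset.univ.filter fun i : Fin k => r < i.1 + 1) =
      (Finset.Ico r k).attachFin (fun m hm => (Finset.mem_Ico.1 hm).2) := by
    ext i
    have := i.isLt
    simp only [Finset.mem_filter, Finset.mem_univ, true_and, Finset.mem_attachFin,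
      Finset.mem_Ico]
    omega
  rw [h, Finset.card_attachFin, Nat.card_Ico]

lemma onelineTail_succ {k : ℕ} (σ : Equiv.Perm (Fin k)) {ρ : ℕ} (hρ : ρ < k) :
    onelineTail σ ρ = insert ((σ ⟨ρ, hρ⟩).1 + 1) (onelineTail σ (ρ + 1)) := by
  have h : (Finset.univ.filter fun i : Fin k => ρ < i.1 + 1)
      = insert (⟨ρ, hρ⟩ : Fin k) (Finset.univ.filter fun i : Fin k => ρ + 1 < i.1 + 1) := by
    ext i
    simp only [Finset.mem_filter, Finset.mem_univ, true_and, Finset.mem_insert, Fin.ext_iff]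
    have := i.isLt
    omega
  rw [onelineTail, onelineTail, h, Finset.image_insert]

lemma not_mem_onelineTail {k : ℕ} (σ : Equiv.Perm (Fin k)) {ρ : ℕ} (hρ : ρ < k) :
    (σ ⟨ρ, hρ⟩).1 + 1 ∉ onelineTail σ (ρ + 1) := by
  intro h
  obtain ⟨i, hi, hv⟩ := Finset.mem_image.1 h
  have hie : i = ⟨ρ, hρ⟩ := σ.injective (Fin.val_injective (by omega))
  have hi' := (Finset.mem_filter.1 hi).2
  rw [hie] at hi'
  simp at hi'

lemma onelineTail_filter_card {k : ℕ} (σ : Equiv.Perm (Fin k)) (r b : ℕ) :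
    ((onelineTail σ r).filter (· < b)).card =
      (Finset.univ.filter fun i : Fin k => r < i.1 + 1 ∧ (σ i).1 + 1 < b).card := by
  rw [onelineTail, Finset.filter_image, Finset.card_image_of_injective _ (val_succ_inj σ),
    Finset.filter_filter]

lemma card_filter_lt_perm {k : ℕ} (σ : Equiv.Perm (Fin k)) (R : Fin k) :
    (Finset.univ.filter fun i : Fin k => σ i < σ R).card = (σ R).1 := by
  have himg : (Finset.univ.filter fun i : Fin k => σ i < σ R).image σ
      = Finset.univ.filter fun j : Fin k => j < σ R := by
    ext j
    simp only [Finset.mem_image, Finset.mem_filter, Finset.mem_univ, true_and]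
    constructor
    · rintro ⟨i, hi, rfl⟩; exact hi
    · intro hj; exact ⟨σ.symm j, by simpa using hj, by simp⟩
  have h2 : (Finset.univ.filter fun j : Fin k => j < σ R) = Finset.Iio (σ R) := by
    ext j; simp
  calc (Finset.univ.filter fun i : Fin k => σ i < σ R).card
      = ((Finset.univ.filter fun i : Fin k => σ i < σ R).image σ).card :=
        (Finset.card_image_of_injective _ σ.injective).symm
    _ = (Finset.Iio (σ R)).card := by rw [himg, h2]
    _ = (σ R).1 := Fin.card_Iio _

lemma card_filter_lt_fin {k : ℕ} (R : Fin k) :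
    (Finset.univ.filter fun i : Fin k => i < R).card = R.1 := by
  have h : (Finset.univ.filter fun i : Fin k => i < R) = Finset.Iio R := by
    ext i; simp
  rw [h, Fin.card_Iio]

lemma rank_eq {k : ℕ} (σ : Equiv.Perm (Fin k)) (R : Fin k) :
    (Finset.univ.filter fun i : Fin k =>
        R.1 + 1 < i.1 + 1 ∧ (σ i).1 + 1 < (σ R).1 + 1).card + R.1 + 1
      = (σ R).1 + 1 + mcount σ R := by
  classical
  have hdA : Disjoint (Finset.univ.filter fun i : Fin k => i < R ∧ σ i < σ R)
      (Finset.univ.filter fun i : Fin k => i < R ∧ σ R < σ i) := by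
    rw [Finset.disjoint_left]
    intro a ha hb
    simp only [Finset.mem_filter] at ha hb
    exact absurd hb.2.2 (asymm ha.2.2)
  have hA : (Finset.univ.filter fun i : Fin k => i < R ∧ σ i < σ R).card
      + mcount σ R = R.1 := by
    rw [mcount, ← Finset.card_union_of_disjoint hdA, ← Finset.filter_or]
    rw [show (Finset.univ.filter fun i : Fin k =>
        (i < R ∧ σ i < σ R) ∨ (i < R ∧ σ R < σ i))
        = Finset.univ.filter fun i : Fin k => i < R from
      Finset.filter_congr fun i _ => by
        constructor
        · rintro (⟨h, _⟩ | ⟨h, _⟩) <;> exact h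
        · intro h
          rcases lt_or_gt_of_ne (fun e : σ i = σ R => (ne_of_lt h) (σ.injective e)) with h' | h'
          · exact Or.inl ⟨h, h'⟩
          · exact Or.inr ⟨h, h'⟩]
    exact card_filter_lt_fin R
  have hdB : Disjoint (Finset.univ.filter fun i : Fin k => i < R ∧ σ i < σ R)
      (Finset.univ.filter fun i : Fin k => R < i ∧ σ i < σ R) := by
    rw [Finset.disjoint_left]
    intro a ha hb
    simp only [Finset.mem_filter] at ha hb
    exact absurd hb.2.1 (asymm ha.2.1)
  have hB : (Finset.univ.filter fun i : Fin k => i < R ∧ σ i < σ R).card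
      + (Finset.univ.filter fun i : Fin k => R < i ∧ σ i < σ R).card = (σ R).1 := by
    rw [← Finset.card_union_of_disjoint hdB, ← Finset.filter_or]
    rw [show (Finset.univ.filter fun i : Fin k =>
        (i < R ∧ σ i < σ R) ∨ (R < i ∧ σ i < σ R))
        = Finset.univ.filter fun i : Fin k => σ i < σ R from
      Finset.filter_congr fun i _ => by
        constructor
        · rintro (⟨_, h⟩ | ⟨_, h⟩) <;> exact h
        · intro h
          rcases lt_or_gt_of_ne (fun e : i = R => (ne_of_lt h) (e ▸ rfl)) with h' | h'
          · exact Or.inl ⟨h', h⟩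
          · exact Or.inr ⟨h', h⟩]
    exact card_filter_lt_perm σ R
  have hconv : (Finset.univ.filter fun i : Fin k =>
      R.1 + 1 < i.1 + 1 ∧ (σ i).1 + 1 < (σ R).1 + 1)
      = Finset.univ.filter fun i : Fin k => R < i ∧ σ i < σ R := by
    apply Finset.filter_congr
    intro i _
    simp only [Fin.lt_def]
    omega
  rw [hconv]
  omega

/-- **Lemma (counting `ν^{(r)}_j`).** If `γ` is the tunnel hook covering of `D_μ`
corresponding to `σ ∈ S_k` (terminal cells `τ_r = (σ_r + m_r, 1 + m_r)`), then for
`0 ≤ r < k` and `r < j ≤ k`, `ν^{(r)}_j` equals the number of entries among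
`σ_1, …, σ_r` greater than `β_{σ,r,j−r}`, the `(j−r)`-th smallest element of
`{σ_{r+1}, …, σ_k}`. -/
theorem nuSeq_count (k : ℕ) (hk : 1 ≤ k) (μ : ℕ → ℤ) (σ : Equiv.Perm (Fin k))
    (γ : THC k μ (fun _ => 0))
    (hγ : ∀ r : Fin k, γ.p (r.1 + 1) = ((σ r : ℕ) + 1) + mcount σ r ∧
      γ.q (r.1 + 1) = 1 + mcount σ r)
    (r j : ℕ) (hrk : r < k) (hrj : r < j) (hjk : j ≤ k) :
    nuSeq (fun _ => 0) γ.p r j =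
      (Finset.univ.filter fun i : Fin k =>
        i.1 + 1 ≤ r ∧ beta σ r (j - r) < (σ i : ℕ) + 1).card := by
  revert hrk hrj hjk
  revert j
  induction r with
  | zero =>
    intro j hrk hrj hjk
    simp only [nuSeq]
    rw [eq_comm, Finset.card_eq_zero, Finset.filter_eq_empty_iff]
    intro i _
    rintro ⟨h1, -⟩
    omega
  | succ ρ ih =>
    intro j hrk hrj hjk
    have hρk : ρ < k := by omega
    have hp : γ.p (ρ + 1) = ((σ ⟨ρ, hρk⟩).1 + 1) + mcount σ ⟨ρ, hρk⟩ := (hγ ⟨ρ, hρk⟩).1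
    have hins : onelineTail σ ρ = insert ((σ ⟨ρ, hρk⟩).1 + 1) (onelineTail σ (ρ + 1)) :=
      onelineTail_succ σ hρk
    have hvnm : (σ ⟨ρ, hρk⟩).1 + 1 ∉ onelineTail σ (ρ + 1) := not_mem_onelineTail σ hρk
    have hcard1 : (onelineTail σ (ρ + 1)).card = k - (ρ + 1) := onelineTail_card σ (by omega)
    have hcard0 : (onelineTail σ ρ).card = k - ρ := onelineTail_card σ (by omega)
    have hrank : ((onelineTail σ (ρ + 1)).filter (· < (σ ⟨ρ, hρk⟩).1 + 1)).card + ρ + 1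
        = ((σ ⟨ρ, hρk⟩).1 + 1) + mcount σ ⟨ρ, hρk⟩ := by
      rw [onelineTail_filter_card]
      exact rank_eq σ ⟨ρ, hρk⟩
    have ht' : j - (ρ + 1) - 1 < (onelineTail σ (ρ + 1)).card := by omega
    obtain ⟨b, hb⟩ : ∃ b, beta σ (ρ + 1) (j - (ρ + 1)) = b := ⟨_, rfl⟩
    have hbeta : beta σ (ρ + 1) (j - (ρ + 1)) ∈ onelineTail σ (ρ + 1) ∧
        ((onelineTail σ (ρ + 1)).filter (· < beta σ (ρ + 1) (j - (ρ + 1)))).card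
          = j - (ρ + 1) - 1 := betaFin_spec _ ht'
    rw [hb] at hbeta
    obtain ⟨hbS1, hbcount⟩ := hbeta
    have hbv : b ≠ (σ ⟨ρ, hρk⟩).1 + 1 := fun h => hvnm (h ▸ hbS1)
    have hnu : nuSeq (fun _ => 0) γ.p (ρ + 1) j
        = if ρ + 1 < j ∧ j ≤ γ.p (ρ + 1) then nuSeq (fun _ => 0) γ.p ρ (j - 1) + 1
          else nuSeq (fun _ => 0) γ.p ρ j := by
      simp only [nuSeq, nuUpdate]
    rw [hnu, hb]
    by_cases hcase : j ≤ γ.p (ρ + 1)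
    · rw [if_pos ⟨hrj, hcase⟩]
      have hblt : b < (σ ⟨ρ, hρk⟩).1 + 1 := by
        rcases lt_trichotomy b ((σ ⟨ρ, hρk⟩).1 + 1) with h | h | h
        · exact h
        · exact absurd h hbv
        · exfalso
          have := count_le_count (S := onelineTail σ (ρ + 1)) h.le
          omega
      have hb0 : ((onelineTail σ ρ).sort (· ≤ ·)).getD (j - (ρ + 1) - 1) 0 = b := by
        apply getD_sort_eq (by omega) (hins.symm ▸ Finset.mem_insert_of_mem hbS1)
        rw [hins, Finset.filter_insert, if_neg (by omega)]
        exact hbcount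
      have hih := ih (j - 1) (by omega) (by omega) (by omega)
      rw [hih]
      have hbeta0 : beta σ ρ (j - 1 - ρ) = b := by
        show ((onelineTail σ ρ).sort (· ≤ ·)).getD (j - 1 - ρ - 1) 0 = b
        rw [show j - 1 - ρ - 1 = j - (ρ + 1) - 1 from by omega]
        exact hb0
      rw [hbeta0]
      have hsplit : (Finset.univ.filter fun i : Fin k => i.1 + 1 ≤ ρ + 1 ∧ b < (σ i).1 + 1)
          = insert ⟨ρ, hρk⟩
            (Finset.univ.filter fun i : Fin k => i.1 + 1 ≤ ρ ∧ b < (σ i).1 + 1) := by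
        ext i
        simp only [Finset.mem_filter, Finset.mem_univ, true_and, Finset.mem_insert]
        constructor
        · rintro ⟨h1, h2⟩
          rcases Nat.lt_or_ge i.1 ρ with h | h
          · exact Or.inr ⟨by omega, h2⟩
          · exact Or.inl (Fin.ext (show i.1 = ρ from by omega))
        · rintro (rfl | ⟨h1, h2⟩)
          · exact ⟨le_rfl, hblt⟩
          · exact ⟨by omega, h2⟩
      rw [hsplit, Finset.card_insert_of_notMem (by
        simp only [Finset.mem_filter, Finset.mem_univ, true_and, not_and]
        intro h
        exact absurd (show ρ + 1 ≤ ρ from h) (by omega))]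
    · rw [if_neg (fun h => hcase h.2)]
      have hvb : (σ ⟨ρ, hρk⟩).1 + 1 < b := by
        rcases lt_trichotomy b ((σ ⟨ρ, hρk⟩).1 + 1) with h | h | h
        · exfalso
          have := count_lt_strict hbS1 h
          omega
        · exact absurd h hbv
        · exact h
      have hb0 : ((onelineTail σ ρ).sort (· ≤ ·)).getD (j - (ρ + 1)) 0 = b := by
        apply getD_sort_eq (by omega) (hins.symm ▸ Finset.mem_insert_of_mem hbS1)
        rw [hins, Finset.filter_insert, if_pos hvb,
          Finset.card_insert_of_notMem (fun hmem => hvnm (Finset.mem_filter.1 hmem).1)]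
        omega
      have hih := ih j (by omega) (by omega) (by omega)
      rw [hih]
      have hbeta0 : beta σ ρ (j - ρ) = b := by
        show ((onelineTail σ ρ).sort (· ≤ ·)).getD (j - ρ - 1) 0 = b
        rw [show j - ρ - 1 = j - (ρ + 1) from by omega]
        exact hb0
      rw [hbeta0]
      congr 1
      ext i
      simp only [Finset.mem_filter, Finset.mem_univ, true_and]
      constructor
      · rintro ⟨h1, h2⟩
        exact ⟨by omega, h2⟩
      · rintro ⟨h1, h2⟩
        refine ⟨?_, h2⟩
        rcases Nat.lt_or_ge i.1 ρ with h | h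
        · omega
        · exfalso
          have hiR : i = ⟨ρ, hρk⟩ := Fin.ext (show i.1 = ρ from by omega)
          rw [hiR] at h2
          omega
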